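/- Let a : ℕ → ℤ be an infinite weight sequence whose partial sums are bounded below by -c₀, and suppose limsup_{k→∞} (1/k)·∑_{i<k} a(i) > 0. If additionally the sequence is generated by walking on a finite directed graph with integer-weighted (2-dimensional) edges, then there exists a cycle C in the graph, reachable from the start vertex, with first-coordinate weight w₁(C) ≥ 0 and second-coordinate weight w₂(C) > 0. -/

import Mathlib

/-- If a play `ρ` from `v₀` in a finite 2-dimensionally weighted directed graph has
its first-coordinate energy levels bounded below (by `-c₀`) and a strictly positive
mean-payoff-sup on the second coordinate, then there is a cycle reachable from `v₀`
with nonnegative first-coordinate weight and strictly positive second-coordinate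
weight (a good cycle). -/
theorem exists_good_cycle_of_play {V : Type*} [Fintype V]
    (E : V → V → Prop) (hout : ∀ v : V, ∃ v' : V, E v v')
    (w₁ w₂ : V → V → ℤ) (v₀ : V)
    (ρ : ℕ → V) (hρ0 : ρ 0 = v₀) (hρ : ∀ k : ℕ, E (ρ k) (ρ (k + 1)))
    (c₀ : ℕ)
    (hen : ∀ k : ℕ, 0 ≤ (c₀ : ℤ) + ∑ i ∈ Finset.range k, w₁ (ρ i) (ρ (i + 1)))
    (hmp : 0 < Filter.atTop.limsup
        (fun k : ℕ => ((∑ i ∈ Finset.range k, w₂ (ρ i) (ρ (i + 1)) : ℤ) : ℝ) / k)) :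
    ∃ (n : ℕ) (c : ℕ → V), 1 ≤ n ∧ c n = c 0 ∧
      (∀ i < n, E (c i) (c (i + 1))) ∧
      Relation.ReflTransGen E v₀ (c 0) ∧
      0 ≤ ∑ i ∈ Finset.range n, w₁ (c i) (c (i + 1)) ∧
      0 < ∑ i ∈ Finset.range n, w₂ (c i) (c (i + 1)) := by
  classical
  by_contra hcon
  obtain ⟨A, hA⟩ : ∃ A : ℕ → ℤ, ∀ k, A k = ∑ i ∈ Finset.range k, w₁ (ρ i) (ρ (i + 1)) :=
    ⟨_, fun _ => rfl⟩
  obtain ⟨B, hB⟩ : ∃ B : ℕ → ℤ, ∀ k, B k = ∑ i ∈ Finset.range k, w₂ (ρ i) (ρ (i + 1)) :=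
    ⟨_, fun _ => rfl⟩
  have key : ∀ (f : ℕ → ℤ) (i j : ℕ), i ≤ j →
      ∑ m ∈ Finset.range j, f m
        = (∑ m ∈ Finset.range i, f m) + ∑ m ∈ Finset.range (j - i), f (i + m) := by
    intro f i j hij
    have h := Finset.sum_range_add f i (j - i)
    rwa [Nat.add_sub_cancel' hij] at h
  have hreach : ∀ p, Relation.ReflTransGen E v₀ (ρ p) := by
    intro p
    induction p with
    | zero => rw [hρ0]
    | succ p ih => exact ih.tail (hρ p)
  have H : ∀ i j : ℕ, i < j → ρ i = ρ j → A i ≤ A j → B i < B j → False := by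
    intro i j hij heq h1 h2
    apply hcon
    refine ⟨j - i, fun m => ρ (i + m), by omega, ?_, ?_, ?_, ?_, ?_⟩
    · show ρ (i + (j - i)) = ρ (i + 0)
      rw [Nat.add_sub_cancel' hij.le, Nat.add_zero]
      exact heq.symm
    · intro m _
      exact hρ (i + m)
    · simpa using hreach i
    · show (0:ℤ) ≤ ∑ m ∈ Finset.range (j - i), w₁ (ρ (i + m)) (ρ (i + m + 1))
      have hk : A j = A i + ∑ m ∈ Finset.range (j - i), w₁ (ρ (i + m)) (ρ (i + m + 1)) := by
        rw [hA, hA]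
        exact key (fun m => w₁ (ρ m) (ρ (m + 1))) i j hij.le
      linarith
    · show (0:ℤ) < ∑ m ∈ Finset.range (j - i), w₂ (ρ (i + m)) (ρ (i + m + 1))
      have hk : B j = B i + ∑ m ∈ Finset.range (j - i), w₂ (ρ (i + m)) (ρ (i + m + 1)) := by
        rw [hB, hB]
        exact key (fun m => w₂ (ρ m) (ρ (m + 1))) i j hij.le
      linarith
  have hAlb : ∀ k, -(c₀ : ℤ) ≤ A k := by
    intro k
    have := hen k
    rw [← hA k] at this
    linarith
  -- per-vertex finiteness of B-record indices
  have hrecfin : ∀ v : V, {k : ℕ | (∀ i < k, B i < B k) ∧ ρ k = v}.Finite := by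
    intro v
    set Rv := {k : ℕ | (∀ i < k, B i < B k) ∧ ρ k = v} with hRv
    rcases Set.eq_empty_or_nonempty Rv with h | h
    · rw [h]; exact Set.finite_empty
    · obtain ⟨k₀, hk₀⟩ := h
      have hdec : ∀ x y, x ∈ Rv → y ∈ Rv → x < y → A y < A x := by
        intro x y hx hy hxy
        by_contra hc
        push_neg at hc
        exact H x y hxy (hx.2.trans hy.2.symm) hc (hy.1 x hxy)
      have hinj : Set.InjOn A Rv := by
        intro x hx y hy hxy
        by_contra hne
        rcases Nat.lt_or_ge x y with h' | h'
        · exact absurd hxy (hdec x y hx hy h').ne'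
        · exact absurd hxy.symm (hdec y x hy hx (by omega)).ne'
      have himg : A '' Rv ⊆ (A '' Set.Iic k₀) ∪ Set.Icc (-(c₀:ℤ)) (A k₀) := by
        rintro _ ⟨k, hk, rfl⟩
        rcases le_or_gt k k₀ with h' | h'
        · exact Or.inl ⟨k, h', rfl⟩
        · exact Or.inr ⟨hAlb k, (hdec k₀ k hk₀ hk h').le⟩
      have hfin : (A '' Rv).Finite :=
        (((Set.finite_Iic k₀).image A).union (Set.finite_Icc _ _)).subset himg
      exact Set.Finite.of_finite_image hfin hinj
  have hrecfin' : {k : ℕ | ∀ i < k, B i < B k}.Finite := by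
    have hsub : {k : ℕ | ∀ i < k, B i < B k}
        ⊆ ⋃ v : V, {k : ℕ | (∀ i < k, B i < B k) ∧ ρ k = v} :=
      fun k hk => Set.mem_iUnion.mpr ⟨ρ k, hk, rfl⟩
    exact (Set.finite_iUnion hrecfin).subset hsub
  obtain ⟨N, hN⟩ := hrecfin'.bddAbove
  obtain ⟨M, hM⟩ : ∃ M : ℤ, ∀ k ≤ N, B k ≤ M :=
    ⟨(Finset.range (N + 1)).sup' Finset.nonempty_range_add_one B,
      fun k hk => Finset.le_sup' B (Finset.mem_range.mpr (by omega))⟩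
  have hBM : ∀ k, B k ≤ M := by
    intro k
    induction k using Nat.strong_induction_on with
    | _ k ih =>
      by_contra hk
      push_neg at hk
      have hrec : k ∈ {k : ℕ | ∀ i < k, B i < B k} :=
        fun i hi => lt_of_le_of_lt (ih i hi) hk
      exact absurd (hM k (hN hrec)) (not_le.mpr hk)
  -- analytic contradiction with the limsup hypothesis
  obtain ⟨u, hu⟩ : ∃ u : ℕ → ℝ, ∀ k, u k = ((B k : ℤ) : ℝ) / k := ⟨_, fun _ => rfl⟩
  have hmp' : 0 < Filter.limsup u Filter.atTop := by
    have he : u = fun k : ℕ =>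
        ((∑ i ∈ Finset.range k, w₂ (ρ i) (ρ (i + 1)) : ℤ) : ℝ) / k := by
      funext k
      rw [hu, hB]
    rw [he]
    exact hmp
  have hM'0 : (0:ℝ) ≤ max (M : ℝ) 0 := le_max_right _ _
  by_cases hcob : Filter.atTop.IsCoboundedUnder (· ≤ ·) u
  · have hε : (0:ℝ) < Filter.limsup u Filter.atTop / 2 := by linarith
    have hv0 : Filter.Tendsto (fun k : ℕ => max (M : ℝ) 0 / (k : ℝ)) Filter.atTop (nhds 0) :=
      tendsto_const_div_atTop_nhds_zero_nat _
    have hev : ∀ᶠ k in Filter.atTop, u k ≤ Filter.limsup u Filter.atTop / 2 := by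
      filter_upwards [hv0.eventually_lt_const hε, Filter.eventually_ge_atTop 1] with k h1 h2
      have hk0 : (0:ℝ) < (k : ℝ) := by exact_mod_cast Nat.lt_of_lt_of_le Nat.zero_lt_one h2
      have hBk : ((B k : ℤ) : ℝ) ≤ max (M : ℝ) 0 :=
        le_trans (by exact_mod_cast hBM k) (le_max_left _ _)
      calc u k = ((B k : ℤ) : ℝ) / k := hu k
        _ ≤ max (M : ℝ) 0 / k := (div_le_div_iff_of_pos_right hk0).mpr hBk
        _ ≤ _ := h1.le
    have := Filter.limsup_le_of_le hcob hev
    linarith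
  · have h0 : Filter.limsup u Filter.atTop = 0 := by
      rw [Filter.limsup_eq]
      apply Real.sInf_of_not_bddBelow
      rintro ⟨b, hb⟩
      refine hcob ⟨b, fun a ha => hb ?_⟩
      exact ha
    rw [h0] at hmp'
    exact lt_irrefl 0 hmp'
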